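/- Let Σ be a countably additive vector measure on the Borel σ-algebra of ℝ with values in Matrix (Fin n) (Fin n) ℂ such that Σ(δ) is Hermitian for every Borel set δ. Then Σ can be expressed as a difference of two nonnegative matrix measures: there exist countably additive vector measures Σ₁, Σ₂ on the Borel sets of ℝ with values in Matrix (Fin n) (Fin n) ℂ, with Σ₁(δ) and Σ₂(δ) positive semidefinite for every Borel δ, such that Σ(δ) = Σ₁(δ) − Σ₂(δ) for every Borel δ. -/

import Mathlib

open MeasureTheory
open scoped ComplexOrder

private lemma matkey {n : ℕ} {A : Matrix (Fin n) (Fin n) ℂ} (hA : A.IsHermitian) {c : ℝ}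
    (hc : ∑ i, ∑ j, ‖A i j‖ ≤ c) :
    ((c : ℂ) • (1 : Matrix (Fin n) (Fin n) ℂ) - A).PosSemidef := by
  rw [Matrix.posSemidef_iff_dotProduct_mulVec]
  constructor
  · have h1 : ((c : ℂ) • (1 : Matrix (Fin n) (Fin n) ℂ)).IsHermitian := by
      unfold Matrix.IsHermitian
      rw [Matrix.conjTranspose_smul, Matrix.conjTranspose_one]
      simp [Complex.star_def, Complex.conj_ofReal]
    exact h1.sub hA
  · intro x
    set z : ℂ := dotProduct (star x) (A.mulVec x) with hzdef
    have hzstar : (starRingEnd ℂ) z = z := by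
      have h1 : star z = z := by
        rw [hzdef, ← Matrix.star_dotProduct]
        rw [Matrix.star_mulVec, hA.eq, Matrix.dotProduct_mulVec]
      exact h1
    have hzim : z.im = 0 := (Complex.conj_eq_iff_im.mp hzstar)
    set Sx : ℝ := ∑ k, Complex.normSq (x k) with hSx
    have hSnonneg : 0 ≤ Sx := Finset.sum_nonneg fun k _ => Complex.normSq_nonneg _
    have hSk : ∀ k : Fin n, Complex.normSq (x k) ≤ Sx := fun k =>
      Finset.single_le_sum (fun k _ => Complex.normSq_nonneg (x k)) (Finset.mem_univ k)
    have hdot : dotProduct (star x) x = (Sx : ℂ) := by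
      rw [hSx]
      push_cast
      simp [dotProduct, Complex.star_def, Complex.normSq_eq_conj_mul_self]
    have habsz : ‖z‖ ≤ c * Sx := by
      have h1 : ‖z‖ ≤ ∑ i, ∑ j, ‖A i j‖ * Sx := by
        rw [hzdef]
        simp only [dotProduct]
        refine le_trans (norm_sum_le _ _) ?_
        apply Finset.sum_le_sum
        intro i _
        simp only [Pi.star_apply, Matrix.mulVec, dotProduct]
        rw [Finset.mul_sum]
        refine le_trans (norm_sum_le _ _) ?_
        apply Finset.sum_le_sum
        intro j _
        rw [norm_mul, norm_mul]
        have hxi : ‖x i‖ * ‖x j‖ ≤ Sx := by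
          have h2 := hSk i
          have h3 := hSk j
          rw [← Complex.sq_norm] at h2 h3
          have := norm_nonneg (x i)
          have := norm_nonneg (x j)
          nlinarith [sq_nonneg (‖x i‖ - ‖x j‖)]
        calc ‖star (x i)‖ * (‖A i j‖ * ‖x j‖) = ‖A i j‖ * (‖x i‖ * ‖x j‖) := by
              rw [norm_star]; ring
          _ ≤ ‖A i j‖ * Sx := by
              exact mul_le_mul_of_nonneg_left hxi (norm_nonneg _)
          _ = ‖A i j‖ * Sx := rfl
      refine h1.trans ?_
      simp only [← Finset.sum_mul]
      exact mul_le_mul_of_nonneg_right hc hSnonneg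
    have hzre : z.re ≤ c * Sx := le_trans (Complex.re_le_norm z) habsz
    have key : ((c : ℂ) • (1 : Matrix (Fin n) (Fin n) ℂ) - A).mulVec x
        = (c : ℂ) • x - A.mulVec x := by
      rw [Matrix.sub_mulVec, Matrix.smul_mulVec, Matrix.one_mulVec]
    rw [key, dotProduct_sub, dotProduct_smul, hdot, ← hzdef]
    have hcast : (c : ℂ) • ((Sx : ℝ) : ℂ) = (((c * Sx : ℝ)) : ℂ) := by
      rw [smul_eq_mul]; push_cast; ring
    rw [hcast, Complex.le_def]
    constructor
    · simp only [Complex.zero_re, Complex.sub_re, Complex.ofReal_re]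
      linarith
    · simp [Complex.sub_im, hzim]


/-- **Jordan decomposition for matrix measure-charges (Theorem 5,
finite-dimensional case).**
Every countably additive measure-charge on the Borel sets of `ℝ` with Hermitian
`n × n` matrix values can be expressed as the difference `S = S₁ - S₂` of two
nonnegative matrix measures. -/
theorem stmt_14 (n : ℕ)
    (S : VectorMeasure ℝ (Matrix (Fin n) (Fin n) ℂ))
    (hherm : ∀ δ : Set ℝ, MeasurableSet δ → (S δ).IsHermitian) :
    ∃ S₁ S₂ : VectorMeasure ℝ (Matrix (Fin n) (Fin n) ℂ),
      (∀ δ : Set ℝ, MeasurableSet δ → (S₁ δ).PosSemidef) ∧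
      (∀ δ : Set ℝ, MeasurableSet δ → (S₂ δ).PosSemidef) ∧
      (∀ δ : Set ℝ, S δ = S₁ δ - S₂ δ) := by
  classical
  -- entry evaluation homomorphisms
  let ent : Fin n → Fin n → (Matrix (Fin n) (Fin n) ℂ →+ ℂ) := fun i j =>
    { toFun := fun A => A i j, map_zero' := rfl, map_add' := fun _ _ => rfl }
  have entcont : ∀ i j, Continuous (fun A : Matrix (Fin n) (Fin n) ℂ => A i j) :=
    fun i j => (continuous_apply j).comp (continuous_apply i)
  let sRe : Fin n → Fin n → SignedMeasure ℝ := fun i j =>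
    S.mapRange (Complex.reAddGroupHom.comp (ent i j))
      (Complex.continuous_re.comp (entcont i j))
  let sIm : Fin n → Fin n → SignedMeasure ℝ := fun i j =>
    S.mapRange (Complex.imAddGroupHom.comp (ent i j))
      (Complex.continuous_im.comp (entcont i j))
  let μ : Fin n → Fin n → Measure ℝ := fun i j =>
    (sRe i j).totalVariation + (sIm i j).totalVariation
  have hμfin : ∀ i j, IsFiniteMeasure (μ i j) := by
    intro i j
    have h1 : IsFiniteMeasure ((sRe i j).totalVariation) := by
      unfold SignedMeasure.totalVariation; infer_instance
    have h2 : IsFiniteMeasure ((sIm i j).totalVariation) := by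
      unfold SignedMeasure.totalVariation; infer_instance
    exact @MeasureTheory.isFiniteMeasureAdd _ _ _ _ h1 h2
  let ν : Measure ℝ := ∑ i : Fin n, ∑ j : Fin n, μ i j
  haveI hνfin : IsFiniteMeasure ν := by
    apply Finset.sum_induction
    · intro a b ha hb; exact @MeasureTheory.isFiniteMeasureAdd _ _ _ _ ha hb
    · infer_instance
    · intro i _
      apply Finset.sum_induction
      · intro a b ha hb; exact @MeasureTheory.isFiniteMeasureAdd _ _ _ _ ha hb
      · infer_instance
      · intro j _; exact hμfin i j
  -- the scalar bound: sum of entry magnitudes is dominated by ν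
  have hbound : ∀ δ : Set ℝ, MeasurableSet δ →
      ∑ i : Fin n, ∑ j : Fin n, ‖S δ i j‖ ≤ (ν δ).toReal := by
    intro δ hδ
    have hν : (ν δ) = ∑ i : Fin n, ∑ j : Fin n, μ i j δ := by
      rw [Measure.finset_sum_apply]
      exact Finset.sum_congr rfl fun i _ => Measure.finset_sum_apply _ _ _
    have hνtoReal : (ν δ).toReal = ∑ i : Fin n, ∑ j : Fin n, (μ i j δ).toReal := by
      rw [hν, ENNReal.toReal_sum, ]
      · exact Finset.sum_congr rfl fun i _ => by
          rw [ENNReal.toReal_sum]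
          intro j _
          exact @MeasureTheory.measure_ne_top _ _ _ (hμfin i j) δ
      · intro i _
        refine ENNReal.sum_ne_top.mpr fun j _ => ?_
        exact @MeasureTheory.measure_ne_top _ _ _ (hμfin i j) δ
    rw [hνtoReal]
    refine Finset.sum_le_sum fun i _ => Finset.sum_le_sum fun j _ => ?_
    -- entrywise bound
    have tvbound : ∀ s : SignedMeasure ℝ, |s δ| ≤ (s.totalVariation δ).toReal := by
      intro s
      have hs : s δ = (s.toJordanDecomposition.posPart δ).toReal
          - (s.toJordanDecomposition.negPart δ).toReal := by
        conv_lhs => rw [← s.toSignedMeasure_toJordanDecomposition]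
        exact Measure.toSignedMeasure_sub_apply hδ
      have hp := @MeasureTheory.measure_ne_top _ _ _
        s.toJordanDecomposition.posPart_finite δ
      have hq := @MeasureTheory.measure_ne_top _ _ _
        s.toJordanDecomposition.negPart_finite δ
      have htv : (s.totalVariation δ).toReal
          = (s.toJordanDecomposition.posPart δ).toReal
            + (s.toJordanDecomposition.negPart δ).toReal := by
        rw [SignedMeasure.totalVariation, Measure.add_apply, ENNReal.toReal_add hp hq]
      rw [hs, htv]
      have h1 : 0 ≤ (s.toJordanDecomposition.posPart δ).toReal := ENNReal.toReal_nonneg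
      have h2 : 0 ≤ (s.toJordanDecomposition.negPart δ).toReal := ENNReal.toReal_nonneg
      rw [abs_sub_le_iff]; constructor <;> linarith
    have hre : sRe i j δ = (S δ i j).re := rfl
    have him : sIm i j δ = (S δ i j).im := rfl
    have hμapp : (μ i j δ).toReal
        = ((sRe i j).totalVariation δ).toReal + ((sIm i j).totalVariation δ).toReal := by
      have hp := @MeasureTheory.measure_ne_top _ _ _
        (by unfold SignedMeasure.totalVariation; infer_instance :
          IsFiniteMeasure ((sRe i j).totalVariation)) δ
      have hq := @MeasureTheory.measure_ne_top _ _ _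
        (by unfold SignedMeasure.totalVariation; infer_instance :
          IsFiniteMeasure ((sIm i j).totalVariation)) δ
      rw [show μ i j δ = (sRe i j).totalVariation δ + (sIm i j).totalVariation δ from
        Measure.add_apply _ _ _, ENNReal.toReal_add hp hq]
    calc ‖S δ i j‖ ≤ |(S δ i j).re| + |(S δ i j).im| :=
          Complex.norm_le_abs_re_add_abs_im _
      _ ≤ ((sRe i j).totalVariation δ).toReal + ((sIm i j).totalVariation δ).toReal := by
          rw [← hre, ← him]
          exact add_le_add (tvbound _) (tvbound _)
      _ = (μ i j δ).toReal := hμapp.symm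
  -- S₁ : the scalar measure ν times the identity matrix
  let g : ℝ →+ Matrix (Fin n) (Fin n) ℂ :=
    { toFun := fun r => (r : ℂ) • (1 : Matrix (Fin n) (Fin n) ℂ),
      map_zero' := by simp,
      map_add' := fun a b => by push_cast; rw [add_smul] }
  have hg : Continuous (fun r : ℝ => (r : ℂ) • (1 : Matrix (Fin n) (Fin n) ℂ)) :=
    Complex.continuous_ofReal.smul continuous_const
  let S₁ : VectorMeasure ℝ (Matrix (Fin n) (Fin n) ℂ) := ν.toSignedMeasure.mapRange g hg
  have hS₁app : ∀ δ : Set ℝ, MeasurableSet δ →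
      S₁ δ = ((ν δ).toReal : ℂ) • (1 : Matrix (Fin n) (Fin n) ℂ) := by
    intro δ hδ
    show g (ν.toSignedMeasure δ) = _
    rw [Measure.toSignedMeasure_apply_measurable hδ]
    rfl
  refine ⟨S₁, S₁ - S, ?_, ?_, ?_⟩
  · intro δ hδ
    rw [hS₁app δ hδ]
    have h0 : ∑ i : Fin n, ∑ j : Fin n,
        ‖(0 : Matrix (Fin n) (Fin n) ℂ) i j‖ ≤ (ν δ).toReal := by
      simp only [Matrix.zero_apply, norm_zero, Finset.sum_const_zero]
      exact le_trans (by positivity) (hbound δ hδ)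
    simpa using matkey Matrix.isHermitian_zero h0
  · intro δ hδ
    rw [VectorMeasure.sub_apply, hS₁app δ hδ]
    exact matkey (hherm δ hδ) (hbound δ hδ)
  · intro δ
    rw [VectorMeasure.sub_apply]
    abel
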